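/- For every c ≥ 1/6, if (u, v) : [0, t*) → ℝ² is a solution of the planar system u' = −3u² − v, v' = u with (u(0), v(0)) = (0, c), defined on its maximal interval of existence [0, t*) (t* ≤ +∞, i.e. the solution admits no extension to a solution on a strictly larger interval), then u(t) → −∞ and v(t) → −∞ as t → t*. -/

import Mathlib

open Set Filter Real Topology

section aux
variable {c : ℝ} {u v : ℝ → ℝ} {S : Set ℝ}

lemma fi (hS : Convex ℝ S) (h0 : (0:ℝ) ∈ S)
    (hu : ∀ t ∈ S, HasDerivWithinAt u (-3*(u t)^2 - v t) S t)
    (hv : ∀ t ∈ S, HasDerivWithinAt v (u t) S t)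
    (hu0 : u 0 = 0) (hv0 : v 0 = c) :
    ∀ t ∈ S, (-3*(u t)^2 - v t + 1/6) * Real.exp (6 * v t)
      = (1/6 - c) * Real.exp (6 * c) := by
  set F : ℝ → ℝ := fun t => (-3*(u t)^2 - v t + 1/6) * Real.exp (6 * v t) with hF
  have hder : ∀ t ∈ S, HasDerivWithinAt F 0 S t := by
    intro t ht
    have h1 : HasDerivWithinAt (fun t => -3*(u t)^2 - v t + 1/6)
        ((-3) * ((2:ℕ) * (u t) ^ (2-1) * (-3*(u t)^2 - v t)) - u t) S t :=
      ((((hu t ht).pow 2).const_mul (-3)).sub (hv t ht)).add_const (1/6)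
    have h2 : HasDerivWithinAt (fun t => Real.exp (6 * v t))
        (Real.exp (6 * v t) * (6 * u t)) S t := ((hv t ht).const_mul 6).exp
    have h3 := h1.mul h2
    refine h3.congr_deriv ?_
    push_cast
    ring
  intro t ht
  have key := hS.norm_image_sub_le_of_norm_hasDerivWithin_le (C := 0)
    (f' := fun _ => (0:ℝ)) hder (fun x _ => by simp) h0 ht
  simp only [norm_eq_abs, zero_mul] at key
  have hFt : F t = F 0 := by
    have h := abs_nonpos_iff.mp key
    linarith
  have h0' : F 0 = (1/6 - c) * Real.exp (6 * c) := by
    simp only [hF, hu0, hv0]; ring_nf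
  rw [hF] at hFt
  rw [← h0', hF]
  exact hFt

lemma contOn {f : ℝ → ℝ} {d : ℝ → ℝ} (h : ∀ t ∈ S, HasDerivWithinAt f (d t) S t) :
    ContinuousOn f S := fun t ht => (h t ht).continuousWithinAt

lemma diffOn {f : ℝ → ℝ} {d : ℝ → ℝ} (h : ∀ t ∈ S, HasDerivWithinAt f (d t) S t) :
    DifferentiableOn ℝ f (interior S) := fun x hx =>
  (((h x (interior_subset hx)).hasDerivAt
    (mem_interior_iff_mem_nhds.1 hx)).differentiableAt).differentiableWithinAt

lemma derivOn {f : ℝ → ℝ} {d : ℝ → ℝ} (h : ∀ t ∈ S, HasDerivWithinAt f (d t) S t) :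
    ∀ x ∈ interior S, deriv f x = d x := fun x hx =>
  ((h x (interior_subset hx)).hasDerivAt (mem_interior_iff_mem_nhds.1 hx)).deriv

lemma derivle (hS : Convex ℝ S) (h0 : (0:ℝ) ∈ S) (hc : 1/6 ≤ c)
    (hu : ∀ t ∈ S, HasDerivWithinAt u (-3*(u t)^2 - v t) S t)
    (hv : ∀ t ∈ S, HasDerivWithinAt v (u t) S t)
    (hu0 : u 0 = 0) (hv0 : v 0 = c) :
    ∀ t ∈ S, -3*(u t)^2 - v t ≤ -(1/6) := by
  intro t ht
  have hfi := fi hS h0 hu hv hu0 hv0 t ht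
  have hK : (1/6 - c) * Real.exp (6 * c) ≤ 0 :=
    mul_nonpos_of_nonpos_of_nonneg (by linarith) (Real.exp_pos _).le
  nlinarith [Real.exp_pos (6 * v t)]

lemma slope_u (hS : Convex ℝ S) (h0 : (0:ℝ) ∈ S) (hc : 1/6 ≤ c)
    (hu : ∀ t ∈ S, HasDerivWithinAt u (-3*(u t)^2 - v t) S t)
    (hv : ∀ t ∈ S, HasDerivWithinAt v (u t) S t)
    (hu0 : u 0 = 0) (hv0 : v 0 = c) :
    ∀ s ∈ S, ∀ t ∈ S, s ≤ t → u t - u s ≤ -(1/6) * (t - s) := by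
  intro s hs t ht hst
  exact hS.image_sub_le_mul_sub_of_deriv_le (contOn hu) (diffOn hu)
    (fun x hx => by
      rw [derivOn hu x hx]
      exact derivle hS h0 hc hu hv hu0 hv0 x (interior_subset hx)) s hs t ht hst

lemma u_le (hS : Convex ℝ S) (h0 : (0:ℝ) ∈ S) (hpos : ∀ t ∈ S, 0 ≤ t) (hc : 1/6 ≤ c)
    (hu : ∀ t ∈ S, HasDerivWithinAt u (-3*(u t)^2 - v t) S t)
    (hv : ∀ t ∈ S, HasDerivWithinAt v (u t) S t)
    (hu0 : u 0 = 0) (hv0 : v 0 = c) :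
    ∀ t ∈ S, u t ≤ -(1/6) * t := by
  intro t ht
  have := slope_u hS h0 hc hu hv hu0 hv0 0 h0 t ht (hpos t ht)
  rw [hu0] at this; linarith

lemma ant_u (hS : Convex ℝ S) (h0 : (0:ℝ) ∈ S) (hc : 1/6 ≤ c)
    (hu : ∀ t ∈ S, HasDerivWithinAt u (-3*(u t)^2 - v t) S t)
    (hv : ∀ t ∈ S, HasDerivWithinAt v (u t) S t)
    (hu0 : u 0 = 0) (hv0 : v 0 = c) : AntitoneOn u S := by
  intro s hs t ht hst
  have := slope_u hS h0 hc hu hv hu0 hv0 s hs t ht hst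
  linarith

lemma ant_v (hS : Convex ℝ S) (h0 : (0:ℝ) ∈ S) (hpos : ∀ t ∈ S, 0 ≤ t) (hc : 1/6 ≤ c)
    (hu : ∀ t ∈ S, HasDerivWithinAt u (-3*(u t)^2 - v t) S t)
    (hv : ∀ t ∈ S, HasDerivWithinAt v (u t) S t)
    (hu0 : u 0 = 0) (hv0 : v 0 = c) : AntitoneOn v S := by
  refine antitoneOn_of_deriv_nonpos hS (contOn hv) (diffOn hv) (fun x hx => ?_)
  rw [derivOn hv x hx]
  have h1 := u_le hS h0 hpos hc hu hv hu0 hv0 x (interior_subset hx)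
  have h2 := hpos x (interior_subset hx)
  linarith

lemma v_lb (hS : Convex ℝ S) (h0 : (0:ℝ) ∈ S) (hpos : ∀ t ∈ S, 0 ≤ t)
    (hu : ∀ t ∈ S, HasDerivWithinAt u (-3*(u t)^2 - v t) S t)
    (hv : ∀ t ∈ S, HasDerivWithinAt v (u t) S t)
    (hv0 : v 0 = c) {M : ℝ} (hM : ∀ t ∈ S, M ≤ u t) :
    ∀ t ∈ S, c + M * t ≤ v t := by
  intro t ht
  have := hS.mul_sub_le_image_sub_of_le_deriv (contOn hv) (diffOn hv)
    (fun x hx => by rw [derivOn hv x hx]; exact hM x (interior_subset hx)) 0 h0 t ht (hpos t ht)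
  rw [hv0] at this; linarith

end aux


theorem stmt_13 (c : ℝ) (hc : 1/6 ≤ c) (tstar : EReal) (htpos : 0 < tstar)
    (u v : ℝ → ℝ)
    (hu : ∀ t ∈ {t : ℝ | 0 ≤ t ∧ (t : EReal) < tstar},
      HasDerivWithinAt u (-3*(u t)^2 - v t) {t : ℝ | 0 ≤ t ∧ (t : EReal) < tstar} t)
    (hv : ∀ t ∈ {t : ℝ | 0 ≤ t ∧ (t : EReal) < tstar},
      HasDerivWithinAt v (u t) {t : ℝ | 0 ≤ t ∧ (t : EReal) < tstar} t)
    (hu0 : u 0 = 0) (hv0 : v 0 = c)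
    (hmax : ¬ ∃ (S' : Set ℝ) (u' v' : ℝ → ℝ),
      {t : ℝ | 0 ≤ t ∧ (t : EReal) < tstar} ⊂ S' ∧
      (∀ t ∈ S', (0:ℝ) ≤ t) ∧ S'.OrdConnected ∧
      (∀ t ∈ S', HasDerivWithinAt u' (-3*(u' t)^2 - v' t) S' t ∧
        HasDerivWithinAt v' (u' t) S' t) ∧
      (∀ t ∈ {t : ℝ | 0 ≤ t ∧ (t : EReal) < tstar}, u' t = u t ∧ v' t = v t)) :
    Filter.Tendsto u
      (Filter.comap (fun t : ℝ => (t : EReal)) (nhdsWithin tstar (Set.Iio tstar)))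
      Filter.atBot ∧
    Filter.Tendsto v
      (Filter.comap (fun t : ℝ => (t : EReal)) (nhdsWithin tstar (Set.Iio tstar)))
      Filter.atBot := by
  induction tstar using EReal.rec with
  | bot => exact absurd htpos (by simp)
  | top =>
    clear hmax htpos
    have hSeq : {t : ℝ | 0 ≤ t ∧ (t : EReal) < (⊤:EReal)} = Ici 0 := by
      ext t; simp [EReal.coe_lt_top]
    rw [hSeq] at hu hv
    have hS : Convex ℝ (Ici (0:ℝ)) := convex_Ici 0
    have h0 : (0:ℝ) ∈ Ici (0:ℝ) := self_mem_Ici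
    have hpos : ∀ t ∈ Ici (0:ℝ), (0:ℝ) ≤ t := fun t ht => ht
    have hule := u_le hS h0 hpos hc hu hv hu0 hv0
    have hfle : Filter.comap (fun t : ℝ => (t : EReal))
        (nhdsWithin (⊤:EReal) (Set.Iio (⊤:EReal))) ≤ atTop := by
      rw [Filter.le_def]
      intro s hs
      obtain ⟨a, ha⟩ := mem_atTop_sets.1 hs
      refine mem_comap.2 ⟨Set.Ioi (a : EReal),
        mem_nhdsWithin_of_mem_nhds (Ioi_mem_nhds (EReal.coe_lt_top a)), ?_⟩
      intro t ht
      have : (a : EReal) < (t : EReal) := ht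
      exact ha t (le_of_lt (EReal.coe_lt_coe_iff.1 this))
    have hlin : Tendsto (fun t : ℝ => -(1/6) * t) atTop atBot := by
      have := tendsto_id.const_mul_atTop_of_neg (by norm_num : -(1/6:ℝ) < 0)
      simpa using this
    have hu_top : Tendsto u atTop atBot :=
      tendsto_atBot_mono' atTop ((eventually_ge_atTop (0:ℝ)).mono fun t ht => hule t ht) hlin
    have hvle : ∀ t ∈ Ici (1:ℝ), v t - v 1 ≤ -(1/6) * (t - 1) := by
      intro t ht
      have hsub : Ici (1:ℝ) ⊆ Ici (0:ℝ) := Ici_subset_Ici.2 (by norm_num)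
      have hsubi : interior (Ici (1:ℝ)) ⊆ interior (Ici (0:ℝ)) := interior_mono hsub
      refine (convex_Ici 1).image_sub_le_mul_sub_of_deriv_le ((contOn hv).mono hsub)
        ((diffOn hv).mono hsubi) (fun x hx => ?_) 1 self_mem_Ici t ht ht
      rw [derivOn hv x (hsubi hx)]
      rw [interior_Ici] at hx
      have h1 := hule x (le_trans (by norm_num : (0:ℝ) ≤ 1) hx.le)
      have : (1:ℝ) < x := hx
      linarith
    have hv_top : Tendsto v atTop atBot := by
      have hlin2 : Tendsto (fun t : ℝ => v 1 + -(1/6) * (t - 1)) atTop atBot := by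
        apply tendsto_atBot_add_const_left
        have h1 : Tendsto (fun t : ℝ => t - 1) atTop atTop :=
          tendsto_atTop_add_const_right atTop (-1) tendsto_id
        exact h1.const_mul_atTop_of_neg (by norm_num : -(1/6:ℝ) < 0)
      refine tendsto_atBot_mono' atTop ?_ hlin2
      filter_upwards [eventually_ge_atTop (1:ℝ)] with t ht
      have := hvle t ht
      linarith
    exact ⟨hu_top.mono_left hfle, hv_top.mono_left hfle⟩
  | coe T =>
    have hT : 0 < T := EReal.coe_pos.1 htpos
    have hSeq : {t : ℝ | 0 ≤ t ∧ (t : EReal) < ((T:ℝ) : EReal)} = Ico 0 T := by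
      ext t; simp [EReal.coe_lt_coe_iff, Set.mem_Ico]
    rw [hSeq] at hu hv hmax
    have hcomap : Filter.comap (fun t : ℝ => (t : EReal))
        (nhdsWithin (T:EReal) (Set.Iio (T:EReal))) = nhdsWithin T (Set.Iio T) := by
      rw [nhdsWithin, nhdsWithin, comap_inf, comap_principal, EReal.nhds_coe,
        comap_map (EReal.coe_strictMono.injective)]
      congr 1
      congr 1
      ext x
      simp [EReal.coe_lt_coe_iff]
    rw [hcomap]
    have hS : Convex ℝ (Ico 0 T) := convex_Ico 0 T
    have h0 : (0:ℝ) ∈ Ico 0 T := ⟨le_rfl, hT⟩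
    have hpos : ∀ t ∈ Ico 0 T, (0:ℝ) ≤ t := fun t ht => ht.1
    have antU := ant_u hS h0 hc hu hv hu0 hv0
    have antV := ant_v hS h0 hpos hc hu hv hu0 hv0
    have hIooSub : Ioo 0 T ⊆ Ico 0 T := Ioo_subset_Ico_self
    by_cases hb : ∃ M, ∀ t ∈ Ico 0 T, M ≤ u t
    · exfalso
      obtain ⟨M, hM⟩ := hb
      have hvlb : ∀ t ∈ Ico 0 T, c + M * t ≤ v t := v_lb hS h0 hpos hu hv hv0 hM
      have hIoo : (Ioo 0 T).Nonempty := nonempty_Ioo.2 hT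
      have hbddU : BddBelow (u '' Ioo 0 T) := by
        refine ⟨M, ?_⟩
        rintro y ⟨x, hx, rfl⟩
        exact hM x (hIooSub hx)
      have hbddV : BddBelow (v '' Ioo 0 T) := by
        refine ⟨min c (c + M * T), ?_⟩
        rintro y ⟨x, hx, rfl⟩
        have h1 := hvlb x (hIooSub hx)
        rcases le_total 0 M with h2 | h2
        · nlinarith [min_le_left c (c + M * T), hx.1.le]
        · nlinarith [min_le_right c (c + M * T), hx.2.le]
      set Lu := sInf (u '' Ioo 0 T) with hLu
      set Lv := sInf (v '' Ioo 0 T) with hLv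
      have tendU : Tendsto u (nhdsWithin T (Set.Iio T)) (nhds Lu) :=
        AntitoneOn.tendsto_nhdsWithin_Ioo_left hIoo (antU.mono hIooSub) hbddU
      have tendV : Tendsto v (nhdsWithin T (Set.Iio T)) (nhds Lv) :=
        AntitoneOn.tendsto_nhdsWithin_Ioo_left hIoo (antV.mono hIooSub) hbddV
      set U : ℝ → ℝ := fun t => if t < T then u t else Lu with hUdef
      set V : ℝ → ℝ := fun t => if t < T then v t else Lv with hVdef
      have hUeq : ∀ t ∈ Ico 0 T, U t = u t := fun t ht => if_pos ht.2
      have hVeq : ∀ t ∈ Ico 0 T, V t = v t := fun t ht => if_pos ht.2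
      have hUT : U T = Lu := if_neg (lt_irrefl T)
      have hVT : V T = Lv := if_neg (lt_irrefl T)
      have hmemIco : ∀ t ∈ Ico 0 T, Ico 0 T ∈ nhdsWithin t (Icc 0 T) := by
        intro t ht
        have h1 : Iio T ∈ nhdsWithin t (Icc 0 T) :=
          mem_nhdsWithin_of_mem_nhds (Iio_mem_nhds ht.2)
        filter_upwards [h1, self_mem_nhdsWithin] with x hx1 hx2
        exact ⟨hx2.1, hx1⟩
      have hIcoNhds : ∀ x ∈ Ioo 0 T, Ico 0 T ∈ nhds x := fun x hx =>
        mem_of_superset (isOpen_Ioo.mem_nhds hx) hIooSub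
      have hUda : ∀ x ∈ Ioo 0 T, HasDerivAt U (-3*(u x)^2 - v x) x := by
        intro x hx
        have h1 := (hu x (hIooSub hx)).hasDerivAt (hIcoNhds x hx)
        refine h1.congr_of_eventuallyEq ?_
        filter_upwards [Iio_mem_nhds hx.2] with y hy
        exact if_pos hy
      have hVda : ∀ x ∈ Ioo 0 T, HasDerivAt V (u x) x := by
        intro x hx
        have h1 := (hv x (hIooSub hx)).hasDerivAt (hIcoNhds x hx)
        refine h1.congr_of_eventuallyEq ?_
        filter_upwards [Iio_mem_nhds hx.2] with y hy
        exact if_pos hy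
      have hIooMem : Ioo 0 T ∈ nhdsWithin T (Set.Iio T) :=
        Ioo_mem_nhdsLT_of_mem ⟨hT, le_rfl⟩
      have hUT' : HasDerivWithinAt U (-3*(U T)^2 - V T) (Icc 0 T) T := by
        have hderiv : HasDerivWithinAt U (-3*Lu^2 - Lv) (Iic T) T := by
          apply hasDerivWithinAt_Iic_of_tendsto_deriv (s := Ioo 0 T)
          · exact fun x hx => (hUda x hx).differentiableAt.differentiableWithinAt
          · show Tendsto U (nhdsWithin T (Ioo 0 T)) (nhds (U T))
            rw [hUT]
            refine Tendsto.congr' ?_ (tendU.mono_left (nhdsWithin_mono T Ioo_subset_Iio_self))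
            filter_upwards [self_mem_nhdsWithin] with x hx
            exact (if_pos hx.2).symm
          · exact hIooMem
          · have h1 : Tendsto (fun x => -3*(u x)^2 - v x) (nhdsWithin T (Set.Iio T))
                (nhds (-3*Lu^2 - Lv)) := ((tendU.pow 2).const_mul (-3)).sub tendV
            refine Tendsto.congr' ?_ h1
            filter_upwards [hIooMem] with x hx
            exact ((hUda x hx).deriv).symm
        rw [hUT, hVT]
        exact hderiv.mono Icc_subset_Iic_self
      have hVT' : HasDerivWithinAt V (U T) (Icc 0 T) T := by
        have hderiv : HasDerivWithinAt V Lu (Iic T) T := by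
          apply hasDerivWithinAt_Iic_of_tendsto_deriv (s := Ioo 0 T)
          · exact fun x hx => (hVda x hx).differentiableAt.differentiableWithinAt
          · show Tendsto V (nhdsWithin T (Ioo 0 T)) (nhds (V T))
            rw [hVT]
            refine Tendsto.congr' ?_ (tendV.mono_left (nhdsWithin_mono T Ioo_subset_Iio_self))
            filter_upwards [self_mem_nhdsWithin] with x hx
            exact (if_pos hx.2).symm
          · exact hIooMem
          · refine Tendsto.congr' ?_ tendU
            filter_upwards [hIooMem] with x hx
            exact ((hVda x hx).deriv).symm
        rw [hUT]
        exact hderiv.mono Icc_subset_Iic_self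
      have hUW : ∀ t ∈ Icc 0 T,
          HasDerivWithinAt U (-3*(U t)^2 - V t) (Icc 0 T) t ∧
          HasDerivWithinAt V (U t) (Icc 0 T) t := by
        intro t ht
        rcases eq_or_lt_of_le ht.2 with heq | hlt
        · subst heq
          exact ⟨hUT', hVT'⟩
        · have htm : t ∈ Ico 0 T := ⟨ht.1, hlt⟩
          have hmem := hmemIco t htm
          have h1 : HasDerivWithinAt u (-3*(u t)^2 - v t) (Icc 0 T) t :=
            (hu t htm).mono_of_mem_nhdsWithin hmem
          have h2 : HasDerivWithinAt v (u t) (Icc 0 T) t :=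
            (hv t htm).mono_of_mem_nhdsWithin hmem
          have hee : U =ᶠ[nhdsWithin t (Icc 0 T)] u := by
            filter_upwards [hmem] with x hx
            exact if_pos hx.2
          have hee' : V =ᶠ[nhdsWithin t (Icc 0 T)] v := by
            filter_upwards [hmem] with x hx
            exact if_pos hx.2
          constructor
          · have h3 := h1.congr_of_eventuallyEq hee (if_pos hlt)
            rwa [hUeq t htm, hVeq t htm]
          · have h3 := h2.congr_of_eventuallyEq hee' (if_pos hlt)
            rwa [hUeq t htm]
      exact hmax ⟨Icc 0 T, U, V,
        (Set.ssubset_iff_of_subset Ico_subset_Icc_self).2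
          ⟨T, right_mem_Icc.2 hT.le, fun h => absurd h.2 (lt_irrefl T)⟩,
        fun t ht => ht.1, ordConnected_Icc, hUW,
        fun t ht => ⟨hUeq t ht, hVeq t ht⟩⟩
    · push_neg at hb
      constructor
      · rw [tendsto_atBot]
        intro b
        obtain ⟨t0, ht0, hlt⟩ := hb b
        filter_upwards [Ioo_mem_nhdsLT ht0.2] with t ht
        exact le_of_lt (lt_of_le_of_lt (antU ht0 ⟨ht0.1.trans ht.1.le, ht.2⟩ ht.1.le) hlt)
      · have hvb : ∀ M, ∃ t ∈ Ico 0 T, v t < M := by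
          intro M
          by_contra h
          push_neg at h
          obtain ⟨K, hK⟩ : ∃ K, K = (1/6 - c) * Real.exp (6 * c) := ⟨_, rfl⟩
          have hKle : K ≤ 0 :=
            hK ▸ mul_nonpos_of_nonpos_of_nonneg (by linarith) (Real.exp_pos _).le
          have hbound : ∀ t ∈ Ico 0 T,
              3*(u t)^2 ≤ 1/6 - M + (-K) * Real.exp (-(6*M)) := by
            intro t ht
            have hfi := fi hS h0 hu hv hu0 hv0 t ht
            have hvM := h t ht
            have hexp : Real.exp (-(6 * v t)) ≤ Real.exp (-(6*M)) :=
              Real.exp_le_exp.2 (by linarith)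
            have heq : -3*(u t)^2 - v t + 1/6 = K * Real.exp (-(6 * v t)) := by
              rw [Real.exp_neg, hK]
              field_simp
              rw [mul_comm (v t) 6]
              linarith [hfi]
            nlinarith [Real.exp_pos (-(6 * v t)), Real.exp_pos (-(6*M))]
          obtain ⟨B, hBdef⟩ : ∃ B, B = 1/6 - M + (-K) * Real.exp (-(6*M)) := ⟨_, rfl⟩
          rw [← hBdef] at hbound
          have hB0 : (0:ℝ) ≤ B := by
            have := hbound 0 h0
            rw [hu0] at this
            nlinarith [this]
          obtain ⟨t, ht, hlt⟩ := hb (-(Real.sqrt (B/3)) - 1)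
          have hs := Real.sq_sqrt (by positivity : (0:ℝ) ≤ B/3)
          have hsn := Real.sqrt_nonneg (B/3)
          have h1 : (0:ℝ) < -(u t) - Real.sqrt (B/3) - 1 := by linarith
          have h2 : (0:ℝ) < -(u t) + Real.sqrt (B/3) + 1 := by linarith
          have h3 : B/3 + 2*Real.sqrt (B/3) + 1 < (u t)^2 := by
            nlinarith [mul_pos h1 h2, hs]
          have h4 := hbound t ht
          nlinarith [h4, hsn, h3]
        rw [tendsto_atBot]
        intro b
        obtain ⟨t0, ht0, hlt⟩ := hvb b
        filter_upwards [Ioo_mem_nhdsLT ht0.2] with t ht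
        exact le_of_lt (lt_of_le_of_lt (antV ht0 ⟨ht0.1.trans ht.1.le, ht.2⟩ ht.1.le) hlt)
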